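/- Let K1 and K2 be finite abstract simplicial complexes and let G be a subgraph of Sd1(K1) such that (G, dim) is color-preserving isomorphic to (Sd1(K2), dim). Then the vertex set of G is downward closed: for every vertex τ of G and every nonempty subset τ' ⊆ τ, the simplex τ' is also a vertex of G. Consequently, the family K1' consisting of the empty set together with all simplices τ ∈ K1 that are vertices of G is a subcomplex of K1, and G equals Sd1(K1'). -/

import Mathlib

open Finset

/-- A finite abstract simplicial complex on a vertex type `V`: a finite family of
finite sets that is closed under taking subsets (and contains the empty set). -/
structure AbstractComplex (V : Type*) [DecidableEq V] where
  simplices : Finset (Finset V)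
  empty_mem : ∅ ∈ simplices
  downClosed : ∀ σ ∈ simplices, ∀ τ ⊆ σ, τ ∈ simplices

namespace AbstractComplex

variable {V : Type*} [DecidableEq V]

/-- The vertices of a complex `K`: the elements appearing in singletons of `K`. -/
def Vert (K : AbstractComplex V) : Type _ := {a : V // ({a} : Finset V) ∈ K.simplices}

/-- The vertices of `Sd1 K`: the nonempty simplices of `K`. -/
def SdVert (K : AbstractComplex V) : Type _ :=
  {σ : Finset V // σ ∈ K.simplices ∧ σ.Nonempty}

/-- The 1-skeleton of the barycentric subdivision of `K`: vertices are the nonempty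
simplices of `K`, and two simplices are adjacent iff one is a proper subset of
the other. -/
def Sd1 (K : AbstractComplex V) : SimpleGraph (SdVert K) where
  Adj σ τ := σ.1 ⊂ τ.1 ∨ τ.1 ⊂ σ.1
  symm := ⟨fun _ _ h => h.symm⟩
  loopless := ⟨fun σ h => by
    rcases h with h | h <;> exact (ssubset_irrefl σ.1) h⟩

/-- The coloring `dim` on the vertices of `Sd1 K`: a simplex `σ` gets
color `|σ| - 1`. -/
def dimColor (K : AbstractComplex V) (σ : K.SdVert) : ℕ := σ.1.card - 1

end AbstractComplex

/-- `f` is an isomorphism between the simplicial complexes `K1` and `K2`: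
a bijection between the vertices such that a finite set `{v₁, …, v_k}` of vertices
is a simplex of `K1` precisely when `{f v₁, …, f v_k}` is a simplex of `K2`. -/
def IsComplexIso {V1 V2 : Type*} [DecidableEq V1] [DecidableEq V2]
    (K1 : AbstractComplex V1) (K2 : AbstractComplex V2)
    (f : K1.Vert ≃ K2.Vert) : Prop :=
  ∀ s : Finset K1.Vert,
    s.image (fun a => a.1) ∈ K1.simplices ↔
      s.image (fun a => (f a).1) ∈ K2.simplices

theorem key_lemma {V1 V2 : Type*} [DecidableEq V1] [DecidableEq V2]
    (K1 : AbstractComplex V1) (K2 : AbstractComplex V2)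
    (G : K1.Sd1.Subgraph) (φ : G.coe ≃g K2.Sd1)
    (hφ : ∀ v : G.verts, K2.dimColor (φ v) = K1.dimColor v.1)
    (τ : K1.SdVert) (hτ : τ ∈ G.verts) (σ' : Finset V1)
    (hsub : σ' ⊂ τ.1) (hne : σ'.Nonempty) :
    ∃ h : σ' ∈ K1.simplices ∧ σ'.Nonempty,
      (⟨σ', h⟩ : K1.SdVert) ∈ G.verts ∧ G.Adj ⟨σ', h⟩ τ := by
  classical
  set w : G.verts := ⟨τ, hτ⟩ with hw
  set σ : K2.SdVert := φ w with hσ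
  have hτpos : 1 ≤ τ.1.card := Finset.card_pos.2 τ.2.2
  have hσpos : 1 ≤ σ.1.card := Finset.card_pos.2 σ.2.2
  have hcc : σ.1.card = τ.1.card := by
    have h1 : σ.1.card - 1 = τ.1.card - 1 := hφ w
    omega
  set P2 : Finset (Finset V2) := σ.1.powerset \ {∅, σ.1} with hP2
  set P1 : Finset (Finset V1) := τ.1.powerset \ {∅, τ.1} with hP1
  have hsub2 : ({∅, σ.1} : Finset (Finset V2)) ⊆ σ.1.powerset := by
    intro y hy
    rcases Finset.mem_insert.1 hy with h | h
    · simp [h]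
    · simp [Finset.mem_singleton.1 h]
  have hsub1 : ({∅, τ.1} : Finset (Finset V1)) ⊆ τ.1.powerset := by
    intro y hy
    rcases Finset.mem_insert.1 hy with h | h
    · simp [h]
    · simp [Finset.mem_singleton.1 h]
  have hP2card : P2.card = 2 ^ σ.1.card - 2 := by
    rw [hP2, Finset.card_sdiff_of_subset hsub2, Finset.card_powerset,
      Finset.card_pair (Ne.symm (Finset.nonempty_iff_ne_empty.1 σ.2.2))]
  have hP1card : P1.card = 2 ^ τ.1.card - 2 := by
    rw [hP1, Finset.card_sdiff_of_subset hsub1, Finset.card_powerset,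
      Finset.card_pair (Ne.symm (Finset.nonempty_iff_ne_empty.1 τ.2.2))]
  set f : Finset V2 → Finset V1 := fun x =>
    if h : x ∈ K2.simplices ∧ x.Nonempty
    then ((φ.symm ⟨x, h⟩ : G.verts) : K1.SdVert).1 else ∅ with hf
  have hmemP2 : ∀ x ∈ P2, x ⊂ σ.1 ∧ x.Nonempty ∧ (x ∈ K2.simplices ∧ x.Nonempty) := by
    intro x hx
    rw [hP2, Finset.mem_sdiff, Finset.mem_powerset] at hx
    have hxne : x ≠ ∅ ∧ x ≠ σ.1 := by
      constructor <;> intro h <;> exact hx.2 (by simp [h])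
    have hss : x ⊂ σ.1 := lt_of_le_of_ne hx.1 hxne.2
    have hnon : x.Nonempty := Finset.nonempty_iff_ne_empty.2 hxne.1
    exact ⟨hss, hnon, K2.downClosed _ σ.2.1 _ hx.1, hnon⟩
  -- main properties of f on P2
  have main : ∀ x ∈ P2, ∃ hx : x ∈ K2.simplices ∧ x.Nonempty,
      f x = ((φ.symm ⟨x, hx⟩ : G.verts) : K1.SdVert).1 ∧
      (φ.symm ⟨x, hx⟩ : G.verts).1 ∈ G.verts ∧
      G.Adj ((φ.symm ⟨x, hx⟩ : G.verts) : K1.SdVert) τ ∧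
      f x ⊂ τ.1 ∧ (f x).Nonempty := by
    intro x hxP
    obtain ⟨hss, hnon, hx⟩ := hmemP2 x hxP
    refine ⟨hx, ?_⟩
    have hfx : f x = ((φ.symm ⟨x, hx⟩ : G.verts) : K1.SdVert).1 := by
      rw [hf]; simp [hx]
    set v : G.verts := φ.symm ⟨x, hx⟩ with hv
    have hadj2 : K2.Sd1.Adj ⟨x, hx⟩ σ := Or.inl hss
    have hadjG : G.coe.Adj v w := by
      rw [← φ.map_rel_iff]
      have : φ v = ⟨x, hx⟩ := by rw [hv]; exact φ.apply_symm_apply _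
      rw [this]
      exact hadj2
    have hadj : G.Adj (v : K1.SdVert) τ := hadjG
    have hcardv : (v : K1.SdVert).1.card = x.card := by
      have h1 := hφ v
      have h2 : φ v = ⟨x, hx⟩ := by rw [hv]; exact φ.apply_symm_apply _
      rw [h2] at h1
      have h1' : x.card - 1 = (v : K1.SdVert).1.card - 1 := h1
      have hp1 : 1 ≤ x.card := Finset.card_pos.2 hx.2
      have hp2 : 1 ≤ (v : K1.SdVert).1.card := Finset.card_pos.2 (v : K1.SdVert).2.2
      omega
    have hlt : (v : K1.SdVert).1.card < τ.1.card := by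
      rw [hcardv, ← hcc]
      exact Finset.card_lt_card hss
    have hsubv : (v : K1.SdVert).1 ⊂ τ.1 := by
      rcases G.adj_sub hadj with h | h
      · exact h
      · exact absurd (Finset.card_lt_card h) (by omega)
    exact ⟨hfx, v.2, hadj, hfx ▸ hsubv, hfx ▸ (v : K1.SdVert).2.2⟩
  have maps : ∀ x ∈ P2, f x ∈ P1 := by
    intro x hx
    obtain ⟨hx', -, -, -, hss, hnon⟩ := main x hx
    rw [hP1, Finset.mem_sdiff, Finset.mem_powerset]
    refine ⟨hss.subset, ?_⟩
    intro h
    rcases Finset.mem_insert.1 h with h | h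
    · exact Finset.nonempty_iff_ne_empty.1 hnon h
    · exact hss.ne (Finset.mem_singleton.1 h)
  have inj : Set.InjOn f P2 := by
    intro x1 h1 x2 h2 heq
    obtain ⟨hx1, hf1, -⟩ := main x1 h1
    obtain ⟨hx2, hf2, -⟩ := main x2 h2
    rw [hf1, hf2] at heq
    have : (⟨x1, hx1⟩ : K2.SdVert) = ⟨x2, hx2⟩ :=
      φ.symm.toEquiv.injective (Subtype.ext (Subtype.ext heq))
    exact congrArg Subtype.val this
  have himg : P2.image f = P1 := by
    apply Finset.eq_of_subset_of_card_le
    · exact Finset.image_subset_iff.2 maps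
    · rw [Finset.card_image_of_injOn inj, hP2card, hP1card, hcc]
  have hσ'P1 : σ' ∈ P1 := by
    rw [hP1, Finset.mem_sdiff, Finset.mem_powerset]
    refine ⟨hsub.subset, ?_⟩
    intro h
    rcases Finset.mem_insert.1 h with h | h
    · exact Finset.nonempty_iff_ne_empty.1 hne h
    · exact hsub.ne (Finset.mem_singleton.1 h)
  rw [← himg] at hσ'P1
  obtain ⟨x, hxP2, hfx⟩ := Finset.mem_image.1 hσ'P1
  obtain ⟨hx, hfeq, hvmem, hadj, -, -⟩ := main x hxP2
  set v : G.verts := φ.symm ⟨x, hx⟩ with hv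
  have hval : (v : K1.SdVert).1 = σ' := by rw [← hfx, hfeq]
  have hσ'mem : σ' ∈ K1.simplices ∧ σ'.Nonempty := hval ▸ (v : K1.SdVert).2
  refine ⟨hσ'mem, ?_, ?_⟩
  · have : (⟨σ', hσ'mem⟩ : K1.SdVert) = (v : K1.SdVert) := Subtype.ext hval.symm
    rw [this]; exact hvmem
  · have : (⟨σ', hσ'mem⟩ : K1.SdVert) = (v : K1.SdVert) := Subtype.ext hval.symm
    rw [this]; exact hadj
/-- If `G` is a subgraph of `Sd1 K1` such that `(G, dim)` is color-preserving
isomorphic to `(Sd1 K2, dim)`, then the vertex set of `G` is downward closed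
(every nonempty subset of a vertex of `G` is again a vertex of `G`), and the
family `K1'` consisting of the empty set together with all simplices of `K1`
that are vertices of `G` is a subcomplex of `K1` with `G = Sd1 K1'` (witnessed by
a graph isomorphism that is the identity on the underlying simplices). -/
theorem subgraph_colorIso_verts_downClosed
    {V1 V2 : Type*} [DecidableEq V1] [DecidableEq V2]
    (K1 : AbstractComplex V1) (K2 : AbstractComplex V2)
    (G : K1.Sd1.Subgraph) (φ : G.coe ≃g K2.Sd1)
    (hφ : ∀ v : G.verts, K2.dimColor (φ v) = K1.dimColor v.1) :
    (∀ τ ∈ G.verts, ∀ τ' : Finset V1, τ' ⊆ τ.1 → τ'.Nonempty →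
        ∀ h : τ' ∈ K1.simplices ∧ τ'.Nonempty, (⟨τ', h⟩ : K1.SdVert) ∈ G.verts) ∧
      ∃ K1' : AbstractComplex V1,
        (∀ τ : Finset V1, τ ∈ K1'.simplices ↔
          (τ = ∅ ∨ ∃ h : τ ∈ K1.simplices ∧ τ.Nonempty,
            (⟨τ, h⟩ : K1.SdVert) ∈ G.verts)) ∧
        K1'.simplices ⊆ K1.simplices ∧
        ∃ e : G.coe ≃g K1'.Sd1, ∀ v : G.verts, (e v).1 = v.1.1 := by
  classical
  have down : ∀ τ : K1.SdVert, τ ∈ G.verts → ∀ τ' : Finset V1, τ' ⊆ τ.1 → τ'.Nonempty →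
      ∀ h : τ' ∈ K1.simplices ∧ τ'.Nonempty, (⟨τ', h⟩ : K1.SdVert) ∈ G.verts := by
    intro τ hτ τ' hsub hne h
    rcases eq_or_ne τ' τ.1 with heq | hne'
    · have : (⟨τ', h⟩ : K1.SdVert) = τ := Subtype.ext heq
      rw [this]; exact hτ
    · obtain ⟨h', hv, -⟩ := key_lemma K1 K2 G φ hφ τ hτ τ' (lt_of_le_of_ne hsub hne') hne
      exact hv
  refine ⟨down, ?_⟩
  refine ⟨⟨K1.simplices.filter (fun t => t = ∅ ∨ ∃ h : t ∈ K1.simplices ∧ t.Nonempty,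
      (⟨t, h⟩ : K1.SdVert) ∈ G.verts), ?_, ?_⟩, ?_, ?_, ?_⟩
  · exact Finset.mem_filter.2 ⟨K1.empty_mem, Or.inl rfl⟩
  · intro s hs t hts
    rw [Finset.mem_filter] at hs ⊢
    have hts' : t ∈ K1.simplices := K1.downClosed s hs.1 t hts
    refine ⟨hts', ?_⟩
    rcases eq_or_ne t ∅ with h0 | h0
    · exact Or.inl h0
    have htne : t.Nonempty := Finset.nonempty_iff_ne_empty.2 h0
    rcases hs.2 with h | ⟨hs', hsv⟩
    · exact absurd (h ▸ hts) (by simp [h0])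
    · exact Or.inr ⟨⟨hts', htne⟩, down ⟨s, hs'⟩ hsv t hts htne _⟩
  · intro t
    rw [Finset.mem_filter]
    constructor
    · rintro ⟨-, h⟩; exact h
    · rintro (h | h)
      · exact ⟨h ▸ K1.empty_mem, Or.inl h⟩
      · exact ⟨h.choose.1, Or.inr h⟩
  · exact Finset.filter_subset _ _
  · refine ⟨⟨⟨fun v => ⟨v.1.1, Finset.mem_filter.2 ⟨v.1.2.1, Or.inr ⟨v.1.2, v.2⟩⟩, v.1.2.2⟩,
      fun u => ⟨⟨u.1, (Finset.mem_filter.1 u.2.1).1, u.2.2⟩, ?_⟩,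
      fun v => ?_, fun u => ?_⟩, ?_⟩, fun v => rfl⟩
    · rcases (Finset.mem_filter.1 u.2.1).2 with h | ⟨h, hv⟩
      · exact absurd h (Finset.nonempty_iff_ne_empty.1 u.2.2)
      · exact hv
    · apply Subtype.ext; apply Subtype.ext; rfl
    · apply Subtype.ext; rfl
    · intro a b
      constructor
      · rintro (h | h)
        · obtain ⟨h', hv, hadj⟩ := key_lemma K1 K2 G φ hφ b.1 b.2 a.1.1 h a.1.2.2
          have : (⟨a.1.1, h'⟩ : K1.SdVert) = a.1 := Subtype.ext rfl
          rw [this] at hadj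
          exact hadj
        · obtain ⟨h', hv, hadj⟩ := key_lemma K1 K2 G φ hφ a.1 a.2 b.1.1 h b.1.2.2
          have : (⟨b.1.1, h'⟩ : K1.SdVert) = b.1 := Subtype.ext rfl
          rw [this] at hadj
          exact hadj.symm
      · intro h
        exact G.adj_sub h
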